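/- Let (X, Y) ~ G', where Y denotes the last N coordinates (so Y_i = (H·X)_i² − ε). Then for all sufficiently large N, Pr[ |Σ_{i=1}^{N} Y_i| ≥ 3·√N ] ≤ 2·exp(−1/ε). -/

import Mathlib

open MeasureTheory ProbabilityTheory Finset

noncomputable section

/-- Bit strings of length `n`; there are `N = 2^n` of them. -/
abbrev BV (n : ℕ) := Fin n → Bool

/-- Inner product (mod nothing, just the count) of two bit strings. -/
def bip {n : ℕ} (x y : BV n) : ℕ := (Finset.univ.filter fun i => x i && y i).card

/-- The `N × N` normalized Walsh-Hadamard matrix, `H_{x,y} = (-1)^{⟨x,y⟩} / √N`. -/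
def Had (n : ℕ) : Matrix (BV n) (BV n) ℝ :=
  Matrix.of fun x y => (-1 : ℝ) ^ bip x y / Real.sqrt (2 ^ n)

/-- `ε = 1 / (C ln N)` with `N = 2^n`. -/
def eps (C : ℝ) (n : ℕ) : ℝ := 1 / (C * Real.log (2 ^ n))

/-- The Gaussian vector `X` with i.i.d. `N(0, ε)` coordinates. -/
def gaussVec (C : ℝ) (n : ℕ) : Measure (BV n → ℝ) :=
  Measure.pi fun _ => gaussianReal 0 (eps C n).toNNReal

/-- The distribution `G'` of `Z = (X, Y∘Y - ε·𝟙)` with `Y = H·X`, packed as a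
function on `BV n ⊕ BV n` (first `N` coordinates are `X`, last `N` are `Y∘Y - ε`). -/
def Gmeas' (C : ℝ) (n : ℕ) : Measure (BV n ⊕ BV n → ℝ) :=
  (gaussVec C n).map fun X => Sum.elim X fun i => ((Had n).mulVec X i) ^ 2 - eps C n

/-- Truncation to `[-1, 1]`. -/
def trnc (a : ℝ) : ℝ := min 1 (max (-1) a)

/-- Randomized rounding of `a` to `±1`: output `1` with probability `(1 + trnc a)/2`
and `-1` with probability `(1 - trnc a)/2`. -/
def roundM (a : ℝ) : Measure ℝ :=
  ((1 + trnc a) / 2).toNNReal • Measure.dirac 1 +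
    ((1 - trnc a) / 2).toNNReal • Measure.dirac (-1)

/-- The distribution `D` on `{±1}^{2N}`: sample `z ~ G'` and round each coordinate
independently. -/
def Dmeas (C : ℝ) (n : ℕ) : Measure (BV n ⊕ BV n → ℝ) :=
  (Gmeas' C n).bind fun z => Measure.pi fun i => roundM (z i)

/-- `F : ℝ^ι → ℝ` is multilinear if `F z = Σ_S F̂(S) ∏_{i ∈ S} z_i`. -/
def IsMultilinear {ι : Type*} [Fintype ι] [DecidableEq ι] (F : (ι → ℝ) → ℝ) : Prop :=
  ∃ c : Finset ι → ℝ, ∀ z, F z = ∑ S : Finset ι, c S * ∏ i ∈ S, z i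

/-- The Fourier coefficient `F̂(S)` of `F` (over the hypercube `{±1}^ι`); for a
multilinear `F` these are precisely its multilinear coefficients. -/
def mlCoeff {ι : Type*} [Fintype ι] [DecidableEq ι] (F : (ι → ℝ) → ℝ) (S : Finset ι) : ℝ :=
  (∑ z : ι → Bool, F (fun i => if z i then 1 else -1) * ∏ i ∈ S, (if z i then (1 : ℝ) else -1)) /
    2 ^ Fintype.card ι

/-- `L_{1,2}(F) = Σ_{|S| = 2} |F̂(S)|`. -/
def L12 {ι : Type*} [Fintype ι] [DecidableEq ι] (F : (ι → ℝ) → ℝ) : ℝ :=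
  ∑ S ∈ Finset.univ.filter (fun S : Finset ι => S.card = 2), |mlCoeff F S|

/-- The restriction `F_ρ` of `F` under `ρ = (S, w)`: coordinates outside `S` are
fixed to the values of `w`. -/
def restrictML {ι : Type*} [DecidableEq ι] (F : (ι → ℝ) → ℝ) (S : Finset ι)
    (w : ι → ℝ) : (ι → ℝ) → ℝ :=
  fun y => F fun i => if i ∈ S then y i else w i

/-- `φ(X, Y) = (1/N) Σ_i (Σ_j H_{ij} X_j)² Y_i`. -/
def phi (n : ℕ) (X Y : BV n → ℝ) : ℝ :=
  (∑ i, ((Had n).mulVec X i) ^ 2 * Y i) / 2 ^ n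

/-- The multilinear part `φ_{i≠j}(X, Y) = (1/N) Σ_i Σ_{j ≠ k} H_{ij} H_{ik} X_j X_k Y_i`. -/
def phiOff (n : ℕ) (X Y : BV n → ℝ) : ℝ :=
  (∑ i, ∑ j, ∑ k ∈ Finset.univ \ {j}, Had n i j * Had n i k * X j * X k * Y i) / 2 ^ n

/-- The Fourier coefficient `f̂(x) = 2^{-n} Σ_y f(y) (-1)^{⟨x,y⟩}` of `f : {0,1}^n → {±1}`. -/
def hatF (n : ℕ) (f : BV n → ℝ) (x : BV n) : ℝ :=
  (∑ y, f y * (-1 : ℝ) ^ bip x y) / 2 ^ n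


section AuxStmt13

open Real
open scoped NNReal ENNReal

private lemma neg_one_pow_bip' {n : ℕ} (x w : BV n) :
    ((-1 : ℝ)) ^ bip x w = ∏ t, (if x t && w t then (-1 : ℝ) else 1) := by
  rw [bip, Finset.prod_ite, Finset.prod_const, Finset.prod_const_one, mul_one]

private lemma sum_neg_one_pow_mul' {n : ℕ} (j k : BV n) :
    ∑ i : BV n, ((-1 : ℝ)) ^ bip i j * (-1 : ℝ) ^ bip i k
      = if j = k then (2 : ℝ) ^ n else 0 := by
  have h1 : ∀ i : BV n, ((-1:ℝ)) ^ bip i j * (-1:ℝ) ^ bip i k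
      = ∏ t, ((if i t && j t then (-1:ℝ) else 1) * (if i t && k t then (-1:ℝ) else 1)) := by
    intro i
    rw [neg_one_pow_bip', neg_one_pow_bip', ← Finset.prod_mul_distrib]
  simp_rw [h1]
  rw [← Fintype.prod_sum (f := fun t (b : Bool) =>
    (if b && j t then (-1:ℝ) else 1) * (if b && k t then (-1:ℝ) else 1))]
  have h2 : ∀ t, (∑ b : Bool, (if b && j t then (-1:ℝ) else 1) * (if b && k t then (-1:ℝ) else 1))
      = if j t = k t then (2:ℝ) else 0 := by
    intro t
    cases hj : j t <;> cases hk : k t <;> simp [Fintype.sum_bool, hj, hk] <;> norm_num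
  rw [Finset.prod_congr rfl fun t _ => h2 t]
  by_cases h : j = k
  · subst h
    simp [Finset.prod_const]
  · rw [if_neg h]
    obtain ⟨t, ht⟩ := Function.ne_iff.mp h
    exact Finset.prod_eq_zero (Finset.mem_univ t) (if_neg ht)

private lemma had_ortho' {n : ℕ} (j k : BV n) :
    ∑ i : BV n, Had n i j * Had n i k = if j = k then (1:ℝ) else 0 := by
  have hs : (0:ℝ) < 2 ^ n := by positivity
  have h1 : ∀ i, Had n i j * Had n i k = ((-1:ℝ))^bip i j * (-1:ℝ)^bip i k / 2 ^ n := by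
    intro i
    simp only [Had, Matrix.of_apply]
    rw [div_mul_div_comm, Real.mul_self_sqrt hs.le]
  simp_rw [h1, ← Finset.sum_div, sum_neg_one_pow_mul']
  split_ifs <;> field_simp <;> ring

private lemma sum_sq_mulVec' {n : ℕ} (X : BV n → ℝ) :
    ∑ i, ((Had n).mulVec X i) ^ 2 = ∑ j, X j ^ 2 := by
  have expand : ∀ i, ((Had n).mulVec X i)^2
      = ∑ j, ∑ k, (Had n i j * Had n i k) * (X j * X k) := by
    intro i
    rw [Matrix.mulVec, dotProduct, sq, Finset.sum_mul_sum]
    exact Finset.sum_congr rfl fun j _ => Finset.sum_congr rfl fun k _ => by ring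
  simp_rw [expand]
  have swap : ∑ i : BV n, ∑ j, ∑ k, (Had n i j * Had n i k) * (X j * X k)
      = ∑ j, ∑ k, (∑ i : BV n, Had n i j * Had n i k) * (X j * X k) := by
    rw [Finset.sum_comm]
    refine Finset.sum_congr rfl fun j _ => ?_
    rw [Finset.sum_comm]
    refine Finset.sum_congr rfl fun k _ => ?_
    rw [Finset.sum_mul]
  rw [swap]
  simp_rw [had_ortho']
  refine Finset.sum_congr rfl fun j _ => ?_
  rw [Finset.sum_eq_single j]
  · rw [if_pos rfl, one_mul, sq]
  · intro k _ hk
    rw [if_neg (fun h => hk h.symm), zero_mul]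
  · intro h; exact absurd (Finset.mem_univ j) h

private lemma exp_sq_pdf_key' {v : ℝ≥0} (hv : 0 < (v:ℝ)) (c : ℝ) (x : ℝ) :
    gaussianPDFReal 0 v x * Real.exp (c * x^2)
      = (Real.sqrt (2 * π * v))⁻¹ * Real.exp (-(1/(2*(v:ℝ)) - c) * x^2) := by
  have h : -(x-0)^2/(2*(v:ℝ)) + c*x^2 = -(1/(2*(v:ℝ))-c)*x^2 := by
    field_simp; ring
  rw [gaussianPDFReal, mul_assoc, ← Real.exp_add, h]

private lemma b_pos' {v : ℝ≥0} (hv : 0 < (v:ℝ)) {c : ℝ} (hc : 2*c*(v:ℝ) < 1) :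
    0 < 1/(2*(v:ℝ)) - c := by
  have h2v : (0:ℝ) < 2 * v := by linarith
  have : c < 1/(2*(v:ℝ)) := by
    rw [lt_div_iff₀ h2v]; nlinarith
  linarith

private lemma integrable_exp_sq_gaussian' {v : ℝ≥0} (hv : 0 < (v:ℝ)) {c : ℝ}
    (hc : 2*c*(v:ℝ) < 1) :
    Integrable (fun x => Real.exp (c * x^2)) (gaussianReal 0 v) := by
  have hvne : v ≠ 0 := by
    intro h; rw [h] at hv; simp at hv
  have hb := b_pos' hv hc
  rw [gaussianReal_of_var_ne_zero _ hvne, gaussianPDF_def]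
  have hrw : (fun x => ENNReal.ofReal (gaussianPDFReal 0 v x))
      = (fun x => ((gaussianPDFReal 0 v x).toNNReal : ℝ≥0∞)) := rfl
  rw [hrw, integrable_withDensity_iff_integrable_smul
    ((measurable_gaussianPDFReal 0 v).real_toNNReal)]
  have h1 : (fun x => (gaussianPDFReal 0 v x).toNNReal • Real.exp (c * x^2))
      = fun x => (Real.sqrt (2 * π * v))⁻¹ * Real.exp (-(1/(2*(v:ℝ)) - c) * x^2) := by
    funext x
    rw [NNReal.smul_def, Real.coe_toNNReal _ (gaussianPDFReal_nonneg 0 v x),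
      smul_eq_mul, exp_sq_pdf_key' hv]
  rw [h1]
  exact (integrable_exp_neg_mul_sq hb).const_mul _

private lemma integral_exp_sq_gaussian' {v : ℝ≥0} (hv : 0 < (v:ℝ)) {c : ℝ}
    (hc : 2*c*(v:ℝ) < 1) :
    ∫ x, Real.exp (c * x^2) ∂(gaussianReal 0 v) = 1 / Real.sqrt (1 - 2*c*(v:ℝ)) := by
  have hvne : v ≠ 0 := by
    intro h; rw [h] at hv; simp at hv
  have hb := b_pos' hv hc
  set b : ℝ := 1/(2*(v:ℝ)) - c with hbdef
  rw [gaussianReal_of_var_ne_zero _ hvne, gaussianPDF_def]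
  have hrw : (fun x => ENNReal.ofReal (gaussianPDFReal 0 v x))
      = (fun x => ((gaussianPDFReal 0 v x).toNNReal : ℝ≥0∞)) := rfl
  rw [hrw, integral_withDensity_eq_integral_smul
    ((measurable_gaussianPDFReal 0 v).real_toNNReal)]
  have h1 : (fun x => (gaussianPDFReal 0 v x).toNNReal • Real.exp (c * x^2))
      = fun x => (Real.sqrt (2 * π * v))⁻¹ * Real.exp (-b * x^2) := by
    funext x
    rw [NNReal.smul_def, Real.coe_toNNReal _ (gaussianPDFReal_nonneg 0 v x),
      smul_eq_mul, exp_sq_pdf_key' hv]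
  rw [h1, MeasureTheory.integral_const_mul, integral_gaussian]
  have h2vb : 1 - 2*c*(v:ℝ) = 2*(v:ℝ)*b := by
    rw [hbdef]; field_simp
  rw [h2vb]
  rw [show (Real.sqrt (2*π*(v:ℝ)))⁻¹ = Real.sqrt ((2*π*(v:ℝ))⁻¹) from (Real.sqrt_inv _).symm,
    ← Real.sqrt_mul (by positivity) (π/b), one_div,
    show (Real.sqrt (2*(v:ℝ)*b))⁻¹ = Real.sqrt ((2*(v:ℝ)*b)⁻¹) from (Real.sqrt_inv _).symm]
  congr 1
  have hπ := Real.pi_pos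
  field_simp

private lemma integrable_pi_exp_sq' {n : ℕ} {v : ℝ≥0} (hv : 0 < (v:ℝ)) {c : ℝ}
    (hc : 2*c*(v:ℝ) < 1) :
    Integrable (fun X : BV n → ℝ => Real.exp (c * ∑ j, (X j)^2))
      (Measure.pi fun _ => gaussianReal 0 v) := by
  letI : MeasureSpace ℝ := ⟨gaussianReal 0 v⟩
  haveI : SigmaFinite (volume : Measure ℝ) := inferInstanceAs (SigmaFinite (gaussianReal 0 v))
  have hexp : (fun X : BV n → ℝ => Real.exp (c * ∑ j, (X j)^2))
      = fun X => ∏ j, Real.exp (c * (X j)^2) := by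
    funext X; rw [Finset.mul_sum, Real.exp_sum]
  rw [hexp]
  exact Integrable.fintype_prod (f := fun _ x => Real.exp (c * x^2))
    (fun i => integrable_exp_sq_gaussian' hv hc)

private lemma integral_pi_exp_sq' {n : ℕ} {v : ℝ≥0} (hv : 0 < (v:ℝ)) {c : ℝ}
    (hc : 2*c*(v:ℝ) < 1) :
    ∫ X : BV n → ℝ, Real.exp (c * ∑ j, (X j)^2) ∂(Measure.pi fun _ => gaussianReal 0 v)
      = (1 / Real.sqrt (1 - 2*c*(v:ℝ))) ^ (2^n) := by
  letI : MeasureSpace ℝ := ⟨gaussianReal 0 v⟩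
  haveI : SigmaFinite (volume : Measure ℝ) := inferInstanceAs (SigmaFinite (gaussianReal 0 v))
  have hexp : (fun X : BV n → ℝ => Real.exp (c * ∑ j, (X j)^2))
      = fun X => ∏ j, Real.exp (c * (X j)^2) := by
    funext X; rw [Finset.mul_sum, Real.exp_sum]
  rw [hexp]
  have h := MeasureTheory.integral_fintype_prod_volume_eq_pow (ι := BV n)
    (fun x : ℝ => Real.exp (c * x^2))
  rw [show Fintype.card (BV n) = 2^n by simp [Fintype.card_fun] ] at h
  rw [show (Measure.pi fun _ : BV n => gaussianReal 0 v) = (volume : Measure (BV n → ℝ)) from rfl]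
  rw [h]
  congr 1
  exact integral_exp_sq_gaussian' hv hc

private lemma aux_exp_upper' {u : ℝ} (h0 : 0 ≤ u) (h2 : u ≤ 1/2) :
    1/(1-u) ≤ Real.exp (u + 2*u^2) := by
  have h1 : (0:ℝ) < 1 - u := by linarith
  rw [div_le_iff₀ h1]
  nlinarith [Real.add_one_le_exp (u + 2*u^2), sq_nonneg u]

private lemma aux_exp_lower' {u : ℝ} (h0 : 0 ≤ u) : Real.exp (u - u^2) ≤ 1 + u := by
  have hx : u - u^2 ≤ 1/4 := by nlinarith [sq_nonneg (u - 1/2)]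
  have h1 : 0 < 1 - (u - u^2) := by linarith
  have h2 : 1 - (u-u^2) ≤ Real.exp (-(u-u^2)) := by
    have := Real.add_one_le_exp (-(u-u^2)); linarith
  have h3 : Real.exp (u - u^2) ≤ 1/(1-(u-u^2)) := by
    rw [le_div_iff₀ h1]
    calc Real.exp (u-u^2) * (1-(u-u^2)) ≤ Real.exp (u-u^2) * Real.exp (-(u-u^2)) := by
          exact mul_le_mul_of_nonneg_left h2 (Real.exp_nonneg _)
      _ = 1 := by rw [← Real.exp_add]; simp
  refine h3.trans ?_
  rw [div_le_iff₀ h1]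
  nlinarith

end AuxStmt13

open scoped NNReal ENNReal

/-- Let `(X, Y) ~ G'` with `Y` the last `N` coordinates
(`Y_i = (H X)_i² - ε`). For all sufficiently large `N`,
`Pr[|Σ_i Y_i| ≥ 3 √N] ≤ 2 exp(-1/ε)`. -/
theorem stmt13 (C : ℝ) (hC : 20 ≤ C) :
    ∃ n₀ : ℕ, ∀ n : ℕ, n₀ ≤ n →
      ((Gmeas' C n) {z | 3 * Real.sqrt (2 ^ n) ≤ |∑ i, z (Sum.inr i)|}).toReal
        ≤ 2 * Real.exp (-1 / eps C n) := by
  refine ⟨2, fun n hn => ?_⟩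
  have hC0 : (0:ℝ) < C := by linarith
  have hnR : (2:ℝ) ≤ (n:ℝ) := by exact_mod_cast hn
  have hlog2 : (0.6931471803:ℝ) < Real.log 2 := Real.log_two_gt_d9
  have hlogpow : Real.log ((2:ℝ)^n) = n * Real.log 2 := by rw [Real.log_pow]
  have hl2 : (0:ℝ) < Real.log 2 := by linarith
  have hnl2 : (1.3862943606:ℝ) ≤ (n:ℝ) * Real.log 2 := by
    nlinarith [mul_nonneg (by linarith : (0:ℝ) ≤ (n:ℝ) - 2) hl2.le]
  have hden : (0:ℝ) < C * ((n:ℝ) * Real.log 2) := by nlinarith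
  have hεpos : 0 < eps C n := by
    rw [eps, hlogpow]; exact one_div_pos.mpr hden
  have hεle : eps C n ≤ 1/13 := by
    rw [eps, hlogpow]
    have h13 : (13:ℝ) ≤ C * ((n:ℝ) * Real.log 2) := by
      nlinarith [mul_le_mul hC hnl2 (by norm_num) (by linarith)]
    exact one_div_le_one_div_of_le (by norm_num) h13
  have hinv2 : (2:ℝ) ≤ 1 / eps C n := by
    have := one_div_le_one_div_of_le hεpos (hεle.trans (by norm_num : (1:ℝ)/13 ≤ 1/2))
    simpa using this
  set v : ℝ≥0 := (eps C n).toNNReal with hvdef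
  have hv : (v:ℝ) = eps C n := Real.coe_toNNReal _ hεpos.le
  have hvpos : 0 < (v:ℝ) := by rw [hv]; exact hεpos
  have hNpos : (0:ℝ) < 2^n := by positivity
  set s := Real.sqrt ((2:ℝ)^n) with hsdef
  have hs2 : s^2 = 2^n := Real.sq_sqrt hNpos.le
  have hspos : 0 < s := Real.sqrt_pos.mpr hNpos
  have hsge2 : 2 ≤ s := by
    have h4 : (4:ℝ) ≤ 2^n := by
      calc (4:ℝ) = 2^2 := by norm_num
        _ ≤ 2^n := by exact pow_le_pow_right₀ (by norm_num) hn
    calc (2:ℝ) = Real.sqrt 4 := by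
          rw [show (4:ℝ) = 2^2 by norm_num, Real.sqrt_sq (by norm_num)]
      _ ≤ s := Real.sqrt_le_sqrt h4
  set lam := 1/(2 * eps C n * s) with hlamdef
  have hlampos : 0 < lam := by rw [hlamdef]; positivity
  set u := 1/s with hudef
  have hupos : 0 < u := by rw [hudef]; positivity
  have hule : u ≤ 1/2 := by
    rw [hudef]
    exact one_div_le_one_div_of_le (by norm_num) hsge2
  have hu_eq : 2 * lam * (v:ℝ) = u := by
    rw [hlamdef, hv, hudef]; field_simp
  -- measurability
  have hmeas_fun : Measurable (fun X : BV n → ℝ =>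
      Sum.elim X fun i => ((Had n).mulVec X i)^2 - eps C n) := by
    rw [measurable_pi_iff]
    rintro (j | i)
    · exact measurable_pi_apply j
    · have hmv : Measurable fun X : BV n → ℝ => (Had n).mulVec X i := by
        simp only [Matrix.mulVec, dotProduct]
        exact Finset.measurable_sum _ fun j _ => (measurable_pi_apply j).const_mul _
      exact (hmv.pow_const 2).sub_const _
  have hmeasS : MeasurableSet {z : BV n ⊕ BV n → ℝ | 3 * s ≤ |∑ i, z (Sum.inr i)|} := by
    apply measurableSet_le measurable_const
    exact (Finset.measurable_sum _ fun i _ => measurable_pi_apply (Sum.inr i)).abs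
  haveI : IsProbabilityMeasure (gaussVec C n) :=
    inferInstanceAs (IsProbabilityMeasure
      (Measure.pi fun _ : BV n => gaussianReal 0 (eps C n).toNNReal))
  rw [show Gmeas' C n = (gaussVec C n).map (fun X : BV n → ℝ =>
      Sum.elim X fun i => ((Had n).mulVec X i) ^ 2 - eps C n) from rfl,
    Measure.map_apply hmeas_fun hmeasS]
  -- rewrite the preimage
  have hXsum : ∀ X : BV n → ℝ,
      ∑ i : BV n, (((Had n).mulVec X i)^2 - eps C n) = (∑ j, (X j)^2) - 2^n * eps C n := by
    intro X
    rw [Finset.sum_sub_distrib, sum_sq_mulVec', Finset.sum_const, Finset.card_univ]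
    have hcard : Fintype.card (BV n) = 2^n := by simp [Fintype.card_fun]
    rw [hcard, nsmul_eq_mul]
    push_cast
    ring
  set A : Set (BV n → ℝ) := {X | 2^n * eps C n + 3*s ≤ ∑ j, (X j)^2} with hAdef
  set B : Set (BV n → ℝ) := {X | (∑ j, (X j)^2) ≤ 2^n * eps C n - 3*s} with hBdef
  have hsub : (fun X : BV n → ℝ =>
      Sum.elim X fun i => ((Had n).mulVec X i)^2 - eps C n) ⁻¹'
      {z | 3 * s ≤ |∑ i, z (Sum.inr i)|} ⊆ A ∪ B := by
    intro X hX
    simp only [Set.mem_preimage, Set.mem_setOf_eq, Sum.elim_inr] at hX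
    rw [hXsum X] at hX
    rcases le_abs.mp hX with h | h
    · left; rw [hAdef]; simp only [Set.mem_setOf_eq]; linarith
    · right; rw [hBdef]; simp only [Set.mem_setOf_eq]; linarith
  -- Chernoff upper tail
  have hcU : 2 * lam * (v:ℝ) < 1 := by rw [hu_eq]; linarith
  have hintU : Integrable (fun ω : BV n → ℝ => Real.exp (lam * ∑ j, (ω j)^2))
      (gaussVec C n) := integrable_pi_exp_sq' hvpos hcU
  have chU := measure_ge_le_exp_mul_mgf (μ := gaussVec C n)
    (X := fun X : BV n → ℝ => ∑ j, (X j)^2) (2^n * eps C n + 3*s) hlampos.le hintU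
  have hmgfU : mgf (fun X : BV n → ℝ => ∑ j, (X j)^2) (gaussVec C n) lam
      = (1/Real.sqrt (1 - 2*lam*(v:ℝ)))^(2^n) := integral_pi_exp_sq' hvpos hcU
  have hcL : 2 * (-lam) * (v:ℝ) < 1 := by nlinarith
  have hintL : Integrable (fun ω : BV n → ℝ => Real.exp ((-lam) * ∑ j, (ω j)^2))
      (gaussVec C n) := integrable_pi_exp_sq' hvpos hcL
  have chL := measure_le_le_exp_mul_mgf (μ := gaussVec C n)
    (X := fun X : BV n → ℝ => ∑ j, (X j)^2) (2^n * eps C n - 3*s)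
    (neg_nonpos.mpr hlampos.le) hintL
  have hmgfL : mgf (fun X : BV n → ℝ => ∑ j, (X j)^2) (gaussVec C n) (-lam)
      = (1/Real.sqrt (1 - 2*(-lam)*(v:ℝ)))^(2^n) := integral_pi_exp_sq' hvpos hcL
  -- bound the upper tail
  have hUb : ((gaussVec C n) A).toReal ≤ Real.exp (-(1 / eps C n)) := by
    refine chU.trans ?_
    rw [hmgfU, hu_eq]
    have h1u : (0:ℝ) < 1 - u := by linarith
    have hstep : 1/Real.sqrt (1-u) ≤ Real.exp ((u + 2*u^2)/2) := by
      rw [one_div, ← Real.sqrt_inv, Real.exp_half]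
      apply Real.sqrt_le_sqrt
      rw [← one_div]
      exact aux_exp_upper' hupos.le hule
    have hpow : (1/Real.sqrt (1-u))^(2^n) ≤ (Real.exp ((u+2*u^2)/2)) ^ (2^n) :=
      pow_le_pow_left₀ (by positivity) hstep _
    calc Real.exp (-lam * (2^n * eps C n + 3*s)) * (1/Real.sqrt (1-u))^(2^n)
        ≤ Real.exp (-lam * (2^n * eps C n + 3*s)) * (Real.exp ((u+2*u^2)/2))^(2^n) :=
          mul_le_mul_of_nonneg_left hpow (Real.exp_nonneg _)
      _ = Real.exp (-lam * (2^n * eps C n + 3*s) + (2^n : ℕ) * ((u+2*u^2)/2)) := by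
          rw [← Real.exp_nat_mul, ← Real.exp_add]
      _ ≤ Real.exp (-(1 / eps C n)) := by
          apply Real.exp_le_exp.mpr
          push_cast
          rw [← hs2, hlamdef, hudef]
          have he := hεpos
          have harith : -(1/(2 * eps C n * s)) * (s^2 * eps C n + 3*s)
              + s^2 * ((1/s + 2*(1/s)^2)/2) = 1 - (3/2) * (1/eps C n) := by
            field_simp; ring
          rw [harith]
          linarith
  -- bound the lower tail
  have hLb : ((gaussVec C n) B).toReal ≤ Real.exp (-(1 / eps C n)) := by
    refine chL.trans ?_
    rw [hmgfL, show 1 - 2*(-lam)*(v:ℝ) = 1 + u by rw [← hu_eq]; ring]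
    have h1u : (0:ℝ) < 1 + u := by linarith
    have key : (1+u)⁻¹ ≤ Real.exp (-(u - u^2)) := by
      rw [Real.exp_neg]
      have h := one_div_le_one_div_of_le (Real.exp_pos (u - u^2)) (aux_exp_lower' hupos.le)
      simpa [one_div] using h
    have hstep : 1/Real.sqrt (1+u) ≤ Real.exp (-(u - u^2)/2) := by
      rw [one_div, ← Real.sqrt_inv, show -(u - u^2)/2 = (-(u-u^2))/2 by ring, Real.exp_half]
      exact Real.sqrt_le_sqrt key
    have hpow : (1/Real.sqrt (1+u))^(2^n) ≤ (Real.exp (-(u - u^2)/2)) ^ (2^n) :=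
      pow_le_pow_left₀ (by positivity) hstep _
    calc Real.exp (-(-lam) * (2^n * eps C n - 3*s)) * (1/Real.sqrt (1+u))^(2^n)
        ≤ Real.exp (-(-lam) * (2^n * eps C n - 3*s)) * (Real.exp (-(u - u^2)/2))^(2^n) :=
          mul_le_mul_of_nonneg_left hpow (Real.exp_nonneg _)
      _ = Real.exp (-(-lam) * (2^n * eps C n - 3*s) + (2^n : ℕ) * (-(u - u^2)/2)) := by
          rw [← Real.exp_nat_mul, ← Real.exp_add]
      _ ≤ Real.exp (-(1 / eps C n)) := by
          apply Real.exp_le_exp.mpr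
          push_cast
          rw [← hs2, hlamdef, hudef]
          have he := hεpos
          have harith : -(-(1/(2 * eps C n * s))) * (s^2 * eps C n - 3*s)
              + s^2 * (-(1/s - (1/s)^2)/2) = 1/2 - (3/2) * (1/eps C n) := by
            field_simp; ring
          rw [harith]
          linarith
  -- combine
  have hμ : (gaussVec C n) ((fun X : BV n → ℝ =>
        Sum.elim X fun i => ((Had n).mulVec X i)^2 - eps C n) ⁻¹'
        {z | 3 * s ≤ |∑ i, z (Sum.inr i)|})
      ≤ (gaussVec C n) A + (gaussVec C n) B :=
    le_trans (measure_mono hsub) (measure_union_le _ _)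
  have hAne : (gaussVec C n) A ≠ ⊤ := measure_ne_top _ _
  have hBne : (gaussVec C n) B ≠ ⊤ := measure_ne_top _ _
  calc ((gaussVec C n) ((fun X : BV n → ℝ =>
        Sum.elim X fun i => ((Had n).mulVec X i)^2 - eps C n) ⁻¹'
        {z | 3 * s ≤ |∑ i, z (Sum.inr i)|})).toReal
      ≤ (((gaussVec C n) A) + ((gaussVec C n) B)).toReal :=
        ENNReal.toReal_mono (ENNReal.add_ne_top.mpr ⟨hAne, hBne⟩) hμ
    _ = ((gaussVec C n) A).toReal + ((gaussVec C n) B).toReal :=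
        ENNReal.toReal_add hAne hBne
    _ ≤ Real.exp (-(1 / eps C n)) + Real.exp (-(1 / eps C n)) := add_le_add hUb hLb
    _ = 2 * Real.exp (-1 / eps C n) := by rw [neg_div]; ring
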